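/- Let G be a finite group, M a G-module, and ω : G^n → M an n-cocycle with n ≥ 2 whose image generates a finite subgroup of M. Then there exists a short exact sequence of finite groups 1 → A → Γ → G → 1 with A abelian, and an (n−1)-cochain α of Γ in M, such that the pullback of ω along the projection π : Γ → G equals the coboundary δα. In particular, π*ω = 0 in H^n(Γ; M). -/

import Mathlib

/-- The inhomogeneous group-cohomology coboundary operator, for a group `G`
acting on an abelian group `V` via `ρ`. -/
def dd {G V : Type*} [Group G] [AddCommGroup V] (ρ : G → V → V) {n : ℕ}
    (f : (Fin n → G) → V) : (Fin (n + 1) → G) → V :=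
  fun g => ρ (g 0) (f fun i => g i.succ) +
    ∑ j : Fin (n + 1), ((-1 : ℤ) ^ (j.val + 1)) • f (j.contractNth (· * ·) g)

lemma contractNth_comp {G₁ G₂ : Type*} [Mul G₁] [Mul G₂] (π : G₁ → G₂)
    (hπ : ∀ a b, π (a * b) = π a * π b) {n : ℕ} (j : Fin (n + 1)) (g : Fin (n + 1) → G₁) :
    (fun i => π (Fin.contractNth j (· * ·) g i)) =
      Fin.contractNth j (· * ·) (fun i => π (g i)) := by
  funext k
  unfold Fin.contractNth
  split_ifs <;> simp [hπ]

lemma dd_nat {G₁ G₂ V W : Type*} [Group G₁] [Group G₂] [AddCommGroup V] [AddCommGroup W]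
    (π : G₁ → G₂) (hπ : ∀ a b, π (a * b) = π a * π b)
    (φ : V → W) (hφ : ∀ v w, φ (v + w) = φ v + φ w)
    (ρV : G₂ → V → V) (ρW : G₁ → W → W)
    (hc : ∀ g v, φ (ρV (π g) v) = ρW g (φ v))
    {n : ℕ} (f : (Fin n → G₂) → V) :
    dd ρW (fun g => φ (f (fun i => π (g i)))) =
      fun g => φ (dd ρV f (fun i => π (g i))) := by
  have hφ' : ∀ (z : ℤ) (v : V), φ (z • v) = z • φ v :=
    fun z v => (AddMonoidHom.mk' φ hφ).map_zsmul z v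
  funext g
  show ρW (g 0) (φ (f fun i => π (g i.succ))) +
      ∑ j : Fin (n + 1), ((-1 : ℤ) ^ (j.val + 1)) •
        φ (f fun i => π (Fin.contractNth j (· * ·) g i)) =
    φ (ρV (π (g 0)) (f fun i => π (g i.succ)) +
      ∑ j : Fin (n + 1), ((-1 : ℤ) ^ (j.val + 1)) •
        f (Fin.contractNth j (· * ·) (fun i => π (g i))))
  rw [hφ, hc]
  congr 1
  refine ((map_sum (AddMonoidHom.mk' φ hφ) _ _).trans ?_).symm
  refine Finset.sum_congr rfl fun j _ => ?_
  rw [show ((AddMonoidHom.mk' φ hφ) : V → W) = φ from rfl, hφ',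
    contractNth_comp π hπ]

lemma dd_map {G V W : Type*} [Group G] [AddCommGroup V] [AddCommGroup W]
    (φ : V → W) (hφ : ∀ v w, φ (v + w) = φ v + φ w)
    (ρV : G → V → V) (ρW : G → W → W)
    (hc : ∀ g v, φ (ρV g v) = ρW g (φ v))
    {n : ℕ} (f : (Fin n → G) → V) :
    dd ρW (fun g => φ (f g)) = fun g => φ (dd ρV f g) :=
  dd_nat (fun x : G => x) (fun _ _ => rfl) φ hφ ρV ρW hc f

lemma dd_pull {G₁ G₂ V : Type*} [Group G₁] [Group G₂] [AddCommGroup V]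
    (π : G₁ → G₂) (hπ : ∀ a b, π (a * b) = π a * π b)
    (ρ : G₂ → V → V) {n : ℕ} (f : (Fin n → G₂) → V) :
    dd (fun γ v => ρ (π γ) v) (fun g => f (fun i => π (g i))) =
      fun g => dd ρ f (fun i => π (g i)) :=
  dd_nat π hπ (fun v : V => v) (fun _ _ => rfl) ρ _ (fun _ _ => rfl) f

lemma dd_sub {G V : Type*} [Group G] [AddCommGroup V] (ρ : G → V → V)
    (ha : ∀ g a b, ρ g (a + b) = ρ g a + ρ g b)
    {n : ℕ} (f h : (Fin n → G) → V) :
    dd ρ (f - h) = dd ρ f - dd ρ h := by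
  have hρ : ∀ g, ∀ a b : V, ρ g (a - b) = ρ g a - ρ g b :=
    fun g => (AddMonoidHom.mk' (ρ g) (ha g)).map_sub
  funext g
  simp only [dd, Pi.sub_apply, hρ, smul_sub, Finset.sum_sub_distrib]
  abel

open groupCohomology inhomogeneousCochains in
lemma dd_dd {G V : Type} [Group G] [AddCommGroup V] [DistribMulAction G V] {n : ℕ}
    (f : (Fin n → G) → V) :
    dd (fun g v => g • v) (dd (fun g v => g • v) f) = 0 := by
  letI : SMulCommClass G ℤ V :=
    ⟨fun g z a => ((DistribMulAction.toAddMonoidHom V g).map_zsmul z a)⟩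
  let A : Rep ℤ G := Rep.ofDistribMulAction ℤ G V
  have hd : ∀ (m : ℕ) (h : (Fin m → G) → V), dd (fun g v => g • v) h
      = (inhomogeneousCochains.d A m).hom h := fun m h => rfl
  have h := inhomogeneousCochains.d_comp_d (n := n) (A := A)
  have h2 := LinearMap.ext_iff.1 (ModuleCat.hom_ext_iff.1 h) f
  rw [hd, hd]
  exact h2

lemma dd_dd' {G V : Type} [Group G] [AddCommGroup V] (ρ : G → V → V)
    (h1 : ∀ a, ρ 1 a = a) (hm : ∀ g h a, ρ (g * h) a = ρ g (ρ h a))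
    (ha : ∀ g a b, ρ g (a + b) = ρ g a + ρ g b)
    {n : ℕ} (f : (Fin n → G) → V) : dd ρ (dd ρ f) = 0 := by
  letI : MulAction G V := { smul := ρ, one_smul := h1, mul_smul := hm }
  letI : DistribMulAction G V :=
    { smul_zero := fun g => (AddMonoidHom.mk' (ρ g) (ha g)).map_zero
      smul_add := ha }
  exact dd_dd f

lemma cons_contractNth {α : Type*} (op : α → α → α) {n : ℕ} (x : α)
    (j : Fin (n + 1)) (g : Fin (n + 1) → α) :
    Fin.cons x (Fin.contractNth j op g) = Fin.contractNth j.succ op (Fin.cons x g) := by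
  funext k
  refine Fin.cases ?_ (fun i => ?_) k
  · rw [Fin.cons_zero, Fin.contractNth_apply_of_lt _ _ _ _ (by simp [Fin.succ_pos]),
      Fin.castSucc_zero, Fin.cons_zero]
  · rw [Fin.cons_succ]
    simp only [Fin.contractNth, Fin.val_succ, ← Fin.succ_castSucc, Fin.cons_succ]
    split_ifs <;> first | rfl | omega

/-- The key cocycle identity obtained by evaluating `dd ρ ω = 0` on a prepended tuple. -/
lemma cocycle_cons {G A : Type*} [Group G] [AddCommGroup A] (ρ : G → A → A)
    {m : ℕ} (ω : (Fin (m + 1) → G) → A) (hω : dd ρ ω = 0) (x : G) (g : Fin (m + 1) → G) :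
    ρ x (ω g) = ω (Fin.contractNth 0 (· * ·) (Fin.cons x g)) +
      ∑ j : Fin (m + 1), ((-1 : ℤ) ^ (j.val + 1)) •
        ω (Fin.contractNth j.succ (· * ·) (Fin.cons x g)) := by
  have hid := congrFun hω (Fin.cons x g)
  have ecs : (fun i : Fin (m + 1) => (Fin.cons x g : Fin (m + 2) → G) i.succ) = g := by
    funext i; simp
  simp only [dd, Pi.zero_apply] at hid
  rw [Fin.sum_univ_succ] at hid
  simp only [Fin.cons_zero, ecs, Fin.val_succ, Fin.val_zero, zero_add, pow_one,
    neg_smul, one_smul] at hid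
  have hterm : ∀ j : Fin (m + 1), ((-1 : ℤ) ^ (j.val + 1 + 1)) •
      ω (Fin.contractNth j.succ (· * ·) (Fin.cons x g)) =
      -(((-1 : ℤ) ^ (j.val + 1)) • ω (Fin.contractNth j.succ (· * ·) (Fin.cons x g))) := by
    intro j
    rw [pow_succ, mul_neg_one, neg_smul]
  rw [Finset.sum_congr rfl (fun j _ => hterm j), Finset.sum_neg_distrib] at hid
  have h2 : ρ x (ω g) - (ω (Fin.contractNth 0 (· * ·) (Fin.cons x g)) +
      ∑ j : Fin (m + 1), ((-1 : ℤ) ^ (j.val + 1)) •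
        ω (Fin.contractNth j.succ (· * ·) (Fin.cons x g))) = 0 := by
    rw [← hid]; abel
  exact eq_of_sub_eq_zero h2

lemma base (G A : Type) [Group G] [Finite G] [AddCommGroup A] [Finite A]
    (ρ : G → A → A) (h1 : ∀ a, ρ 1 a = a) (hm : ∀ g h a, ρ (g * h) a = ρ g (ρ h a))
    (ha : ∀ g a b, ρ g (a + b) = ρ g a + ρ g b)
    (ω : (Fin 2 → G) → A) (hω : dd ρ ω = 0) :
    ∃ (Γ : Type) (_ : Group Γ) (_ : Finite Γ) (π : Γ →* G),
      Function.Surjective π ∧ (∀ a b : π.ker, a * b = b * a) ∧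
      ∃ α : (Fin 1 → Γ) → A,
        (fun g : Fin 2 → Γ => ω fun i => π (g i)) = dd (fun γ a => ρ (π γ) a) α := by
  have hρneg : ∀ g b, ρ g (-b) = -ρ g b := fun g b => (AddMonoidHom.mk' (ρ g) (ha g)).map_neg b
  have coc : ∀ g1 g2 g3 : G, ρ g1 (ω ![g2, g3]) - ω ![g1 * g2, g3] + ω ![g1, g2 * g3]
      - ω ![g1, g2] = 0 := by
    intro g1 g2 g3
    have h := congrFun hω ![g1, g2, g3]
    have e0 : (fun i : Fin 2 => (![g1, g2, g3] : Fin 3 → G) i.succ) = ![g2, g3] := by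
      funext i; fin_cases i <;> rfl
    have e1 : Fin.contractNth (0 : Fin 3) (· * ·) ![g1, g2, g3] = ![g1 * g2, g3] := by
      funext k; fin_cases k <;> simp [Fin.contractNth]
    have e2 : Fin.contractNth (1 : Fin 3) (· * ·) ![g1, g2, g3] = ![g1, g2 * g3] := by
      funext k; fin_cases k <;> simp [Fin.contractNth]
    have e3 : Fin.contractNth (2 : Fin 3) (· * ·) ![g1, g2, g3] = ![g1, g2] := by
      funext k; fin_cases k <;> simp [Fin.contractNth]
    have h3 : ∀ F : Fin (2+1) → A, ∑ j : Fin (2+1), F j = F 0 + F 1 + F 2 :=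
      fun F => Fin.sum_univ_three F
    simp only [dd, h3, Pi.zero_apply, Matrix.cons_val_zero, e0, e1, e2, e3] at h
    norm_num at h
    rw [← h]; abel
  have coc' : ∀ g1 g2 g3 : G, ω ![g1, g2 * g3] =
      ω ![g1, g2] + ω ![g1 * g2, g3] - ρ g1 (ω ![g2, g3]) := by
    intro g1 g2 g3
    rw [← sub_eq_zero, ← coc g1 g2 g3]; abel
  have hf1 : ∀ g, ω ![1, g] = ω ![(1 : G), 1] := by
    intro g
    have h := coc 1 1 g
    rw [h1, one_mul, one_mul] at h
    have h' : ω ![(1 : G), g] - ω ![(1 : G), 1] = 0 := by rw [← h]; abel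
    exact eq_of_sub_eq_zero h'
  have hf2 : ∀ g, ω ![g, 1] = ρ g (ω ![(1 : G), 1]) := by
    intro g
    have h := coc g 1 1
    rw [mul_one, mul_one] at h
    have h' : ρ g (ω ![(1 : G), 1]) - ω ![g, 1] = 0 := by rw [← h]; abel
    exact (eq_of_sub_eq_zero h').symm
  -- the extension Γ = A ×_ω G
  letI : Mul (A × G) := ⟨fun x y => (x.1 + ρ x.2 y.1 + ω ![x.2, y.2], x.2 * y.2)⟩
  letI : One (A × G) := ⟨(-ω ![(1 : G), 1], 1)⟩
  letI : Inv (A × G) :=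
    ⟨fun x => (-ω ![(1 : G), 1] - ω ![x.2⁻¹, x.2] - ρ x.2⁻¹ x.1, x.2⁻¹)⟩
  have hmul : ∀ x y : A × G, x * y = (x.1 + ρ x.2 y.1 + ω ![x.2, y.2], x.2 * y.2) :=
    fun _ _ => rfl
  letI grp : Group (A × G) := Group.ofLeftAxioms
    (by
      intro x y z
      rw [hmul, hmul, hmul, hmul]
      refine Prod.ext ?_ (mul_assoc _ _ _)
      show x.1 + ρ x.2 y.1 + ω ![x.2, y.2] + ρ (x.2 * y.2) z.1 + ω ![x.2 * y.2, z.2]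
        = x.1 + ρ x.2 (y.1 + ρ y.2 z.1 + ω ![y.2, z.2]) + ω ![x.2, y.2 * z.2]
      rw [ha, ha, hm, coc' x.2 y.2 z.2]
      abel)
    (by
      intro x
      rw [hmul]
      refine Prod.ext ?_ (one_mul _)
      show -ω ![(1 : G), 1] + ρ 1 x.1 + ω ![(1 : G), x.2] = x.1
      rw [h1, hf1 x.2]
      abel)
    (by
      intro x
      rw [hmul]
      refine Prod.ext ?_ (inv_mul_cancel _)
      show -ω ![(1 : G), 1] - ω ![x.2⁻¹, x.2] - ρ x.2⁻¹ x.1 + ρ x.2⁻¹ x.1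
          + ω ![x.2⁻¹, x.2] = -ω ![(1 : G), 1]
      abel)
  refine ⟨A × G, grp, inferInstance, ?_⟩
  have hone : (1 : A × G) = (-ω ![(1 : G), 1], 1) := rfl
  refine ⟨{ toFun := Prod.snd, map_one' := rfl, map_mul' := fun x y => rfl }, ?_, ?_, ?_⟩
  · exact fun g => ⟨(0, g), rfl⟩
  · intro a b
    have hak : (a : A × G).2 = 1 := a.2
    have hbk : (b : A × G).2 = 1 := b.2
    have : ((a * b : _) : A × G) = ((b * a : _) : A × G) := by
      push_cast
      rw [hmul, hmul, hak, hbk, h1, h1]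
      exact Prod.ext (by abel) rfl
    exact Subtype.ext this
  · refine ⟨fun γ => -(γ 0).1, ?_⟩
    funext g
    have tup2 : (fun i => ((g i).2 : G)) = ![(g 0).2, (g 1).2] := by
      funext i; fin_cases i <;> rfl
    have c0 : Fin.contractNth (0 : Fin 2) (· * ·) g = fun _ => g 0 * g 1 := by
      funext k; fin_cases k <;> simp [Fin.contractNth]
    have c1 : Fin.contractNth (1 : Fin 2) (· * ·) g = fun _ => g 0 := by
      funext k; fin_cases k <;> simp [Fin.contractNth]
    have e : (fun i : Fin 1 => g i.succ) = fun _ => g 1 := by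
      funext i; fin_cases i <;> rfl
    have h2 : ∀ F : Fin (1+1) → A, ∑ j : Fin (1+1), F j = F 0 + F 1 :=
      fun F => Fin.sum_univ_two F
    have hfst : ∀ x y : A × G, (x * y).1 = x.1 + ρ x.2 y.1 + ω ![x.2, y.2] :=
      fun _ _ => rfl
    show ω (fun i => (g i).2) = _
    simp only [dd, h2, c0, c1, e]
    norm_num
    rw [tup2, hfst, hρneg]
    abel


lemma key (k : ℕ) : ∀ (G A : Type) [Group G] [Finite G] [AddCommGroup A] [Finite A]
    (ρ : G → A → A), (∀ a, ρ 1 a = a) → (∀ g h a, ρ (g * h) a = ρ g (ρ h a)) →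
    (∀ g a b, ρ g (a + b) = ρ g a + ρ g b) →
    ∀ (ω : (Fin (k + 2) → G) → A), dd ρ ω = 0 →
    ∃ (Γ : Type) (_ : Group Γ) (_ : Finite Γ) (π : Γ →* G),
      Function.Surjective π ∧ (∀ a b : π.ker, a * b = b * a) ∧
      ∃ α : (Fin (k + 1) → Γ) → A,
        (fun g : Fin (k + 2) → Γ => ω fun i => π (g i)) = dd (fun γ a => ρ (π γ) a) α := by
  induction k with
  | zero =>
    intro G A _ _ _ _ ρ h1 hm ha ω hω
    exact base G A ρ h1 hm ha ω hω
  | succ k IH =>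
    intro G A _ _ _ _ ρ h1 hm ha ω hω
    -- the coinduced module N = Fun(G, A)
    let ρN : G → (G → A) → (G → A) := fun g φ x => φ (x * g)
    have h1N : ∀ φ, ρN 1 φ = φ := fun φ => funext fun x => by simp [ρN]
    have hmN : ∀ g h φ, ρN (g * h) φ = ρN g (ρN h φ) := fun g h φ =>
      funext fun x => by simp [ρN, mul_assoc]
    have haN : ∀ g φ ψ, ρN g (φ + ψ) = ρN g φ + ρN g ψ := fun g φ ψ => rfl
    -- the embedding A → N
    let iA : A → (G → A) := fun a x => ρ x a
    have hiA_add : ∀ a b, iA (a + b) = iA a + iA b := fun a b =>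
      funext fun x => ha x a b
    have hiA_inj : ∀ a b, iA a = iA b → a = b := by
      intro a b h
      have := congrFun h 1
      simpa [iA, h1] using this
    have hiA_eq : ∀ g a, iA (ρ g a) = ρN g (iA a) := fun g a =>
      funext fun x => (hm x g a).symm
    let iHom : A →+ (G → A) := AddMonoidHom.mk' iA hiA_add
    let K : AddSubgroup (G → A) := iHom.range
    -- the quotient module Q = N / A
    let Q := (G → A) ⧸ K
    letI : Finite Q := Quotient.finite _
    let mkQ : (G → A) →+ Q := QuotientAddGroup.mk' K
    have hstab : ∀ g : G, K ≤ K.comap (AddMonoidHom.mk' (ρN g) (haN g)) := by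
      rintro g _ ⟨a, rfl⟩
      exact ⟨ρ g a, hiA_eq g a⟩
    let ρQ : G → Q → Q := fun g => QuotientAddGroup.map K K (AddMonoidHom.mk' (ρN g) (haN g))
      (hstab g)
    have hcQ : ∀ g φ, mkQ (ρN g φ) = ρQ g (mkQ φ) := fun g φ => rfl
    have mkQ_surj : Function.Surjective mkQ := QuotientAddGroup.mk'_surjective K
    have h1Q : ∀ q, ρQ 1 q = q := by
      intro q
      obtain ⟨φ, rfl⟩ := mkQ_surj q
      rw [← hcQ, h1N]
    have hmQ : ∀ g h q, ρQ (g * h) q = ρQ g (ρQ h q) := by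
      intro g h q
      obtain ⟨φ, rfl⟩ := mkQ_surj q
      rw [← hcQ, hmN, ← hcQ, ← hcQ]
    have haQ : ∀ g q r, ρQ g (q + r) = ρQ g q + ρQ g r := fun g q r =>
      map_add (QuotientAddGroup.map K K (AddMonoidHom.mk' (ρN g) (haN g)) (hstab g)) q r
    -- the cochain β with dd β = iA ∘ ω
    let β : (Fin (k + 2) → G) → (G → A) := fun g x => ω (Fin.cons x g)
    have hdβ : dd ρN β = fun g => iA (ω g) := by
      funext g
      funext x
      have hcc := cocycle_cons ρ ω hω x g
      have hc0 : Fin.contractNth 0 (· * ·) (Fin.cons x g) =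
          Fin.cons (x * g 0) (fun i => g i.succ) := by
        funext k'
        refine Fin.cases ?_ (fun i => ?_) k'
        · rw [Fin.contractNth_apply_of_eq _ _ _ _ (by simp), Fin.cons_zero]
          simp
        · rw [Fin.contractNth_apply_of_gt _ _ _ _ (by simp), Fin.cons_succ]
          simp
      show ρN (g 0) (β fun i => g i.succ) x +
        (∑ j : Fin (k + 2 + 1), ((-1 : ℤ) ^ (j.val + 1)) •
          β (Fin.contractNth j (· * ·) g)) x = iA (ω g) x
      rw [Finset.sum_apply]
      have hterm : ∀ j : Fin (k + 2 + 1), (((-1 : ℤ) ^ (j.val + 1)) •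
          β (Fin.contractNth j (· * ·) g)) x = ((-1 : ℤ) ^ (j.val + 1)) •
          ω (Fin.contractNth j.succ (· * ·) (Fin.cons x g)) := by
        intro j
        rw [Pi.smul_apply]
        congr 1
        show ω (Fin.cons x (Fin.contractNth j (· * ·) g)) = _
        rw [cons_contractNth]
      rw [Finset.sum_congr rfl (fun j _ => hterm j)]
      show ω (Fin.cons (x * g 0) (fun i => g i.succ)) + _ = ρ x (ω g)
      rw [hcc, hc0]
    -- the Q-valued cocycle
    let ωQ : (Fin (k + 2) → G) → Q := fun g => mkQ (β g)
    have hωQ : dd ρQ ωQ = 0 := by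
      have h := dd_map mkQ mkQ.map_add ρN ρQ hcQ β
      funext g
      have h2 := congrFun h g
      show dd ρQ (fun g => mkQ (β g)) g = 0
      rw [h2, congrFun hdβ g]
      exact (QuotientAddGroup.eq_zero_iff _).mpr ⟨ω g, rfl⟩
    obtain ⟨Γ, instΓ, finΓ, π, hsurj, hab, α', hα'⟩ :=
      IH G Q ρQ h1Q hmQ haQ ωQ hωQ
    refine ⟨Γ, instΓ, finΓ, π, hsurj, hab, ?_⟩
    -- lift α' to N
    let α'' : (Fin (k + 1) → Γ) → (G → A) := fun g => Quotient.out (α' g)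
    have hout : ∀ g, mkQ (α'' g) = α' g := fun g => Quotient.out_eq' (α' g)
    -- the correction cochain
    let βπ : (Fin (k + 2) → Γ) → (G → A) := fun g => β (fun i => π (g i))
    let γfun : (Fin (k + 2) → Γ) → (G → A) := βπ - dd (fun γ φ => ρN (π γ) φ) α''
    have hγmem : ∀ g, γfun g ∈ K := by
      intro g
      have hq : mkQ (γfun g) = 0 := by
        have hsub : mkQ (γfun g) = mkQ (βπ g) - mkQ (dd (fun γ φ => ρN (π γ) φ) α'' g) :=
          mkQ.map_sub _ _
        have hmap := congrFun (dd_map mkQ mkQ.map_add (fun γ φ => ρN (π γ) φ)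
          (fun γ q => ρQ (π γ) q) (fun γ φ => hcQ (π γ) φ) α'') g
        have houtfun : (fun g => mkQ (α'' g)) = α' := funext hout
        rw [hsub, ← hmap, houtfun]
        have hβπ : mkQ (βπ g) = ωQ (fun i => π (g i)) := rfl
        rw [hβπ, congrFun hα' g]
        exact sub_self _
      exact (QuotientAddGroup.eq_zero_iff _).mp hq
    -- pull the correction back to A
    have hchoice : ∀ g : Fin (k + 2) → Γ, ∃ a : A, iA a = γfun g := fun g => hγmem g
    let αA : (Fin (k + 2) → Γ) → A := fun g => (hchoice g).choose
    have hspec : ∀ g, iA (αA g) = γfun g := fun g => (hchoice g).choose_spec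
    refine ⟨αA, ?_⟩
    funext g
    apply hiA_inj
    have e1 : (fun g : Fin (k + 2 + 1) → Γ => iA (dd (fun γ a => ρ (π γ) a) αA g)) =
        dd (fun γ φ => ρN (π γ) φ) (fun g => iA (αA g)) :=
      (dd_map iA hiA_add (fun γ a => ρ (π γ) a) (fun γ φ => ρN (π γ) φ)
        (fun γ a => hiA_eq (π γ) a) αA).symm
    have e2 : (fun g : Fin (k + 2) → Γ => iA (αA g)) = γfun := funext hspec
    have e3 : dd (fun γ φ => ρN (π γ) φ) γfun =
        dd (fun γ φ => ρN (π γ) φ) βπ - dd (fun γ φ => ρN (π γ) φ)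
          (dd (fun γ φ => ρN (π γ) φ) α'') :=
      dd_sub _ (fun γ φ ψ => haN (π γ) φ ψ) _ _
    have e4 : dd (fun γ φ => ρN (π γ) φ) (dd (fun γ φ => ρN (π γ) φ) α'') = 0 :=
      dd_dd' _ (fun φ => by rw [map_one π, h1N]) (fun γ δ φ => by rw [map_mul π, hmN])
        (fun γ φ ψ => haN (π γ) φ ψ) α''
    have e5 : dd (fun γ φ => ρN (π γ) φ) βπ = fun g => iA (ω (fun i => π (g i))) := by
      have := dd_pull π (map_mul π) ρN β (n := k + 2)
      rw [show (fun (g : Fin (k+2) → Γ) => β (fun i => π (g i))) = βπ from rfl] at this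
      rw [this, hdβ]
    calc iA (ω fun i => π (g i)) = dd (fun γ φ => ρN (π γ) φ) βπ g := (congrFun e5 g).symm
      _ = dd (fun γ φ => ρN (π γ) φ) γfun g := by rw [e3, e4]; simp
      _ = iA (dd (fun γ a => ρ (π γ) a) αA g) := by rw [← e2, ← e1]

/-- a finite-image-generated `n`-cocycle (`n = n' + 2 ≥ 2`) of a finite
group `G` in a `G`-module `M` pulls back to a coboundary along a surjection from a finite
group `Γ` which is an extension of `G` by an abelian kernel. -/
theorem stmt0 {G M : Type*} [Group G] [Finite G] [AddCommGroup M] [DistribMulAction G M]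
    (n : ℕ) (ω : (Fin (n + 2) → G) → M)
    (hω : dd (fun (g : G) (m : M) => g • m) ω = 0)
    (hfin : (AddSubgroup.closure (Set.range ω) : Set M).Finite) :
    ∃ (Γ : Type) (_ : Group Γ) (_ : Finite Γ) (π : Γ →* G),
      Function.Surjective π ∧
      (∀ a b : π.ker, a * b = b * a) ∧
      ∃ α : (Fin (n + 1) → Γ) → M,
        (fun g : Fin (n + 2) → Γ => ω fun i => π (g i)) =
          dd (fun (γ : Γ) (m : M) => π γ • m) α := by
  classical
  set C : AddSubgroup M := AddSubgroup.closure (Set.range ω) with hCdef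
  have hmemC : ∀ x, ω x ∈ C := fun x => AddSubgroup.subset_closure (Set.mem_range_self x)
  -- C is G-stable
  have hstab : ∀ (g : G), ∀ m ∈ C, g • m ∈ C := by
    intro g
    have hle : C ≤ AddSubgroup.comap (DistribMulAction.toAddMonoidHom M g) C := by
      rw [hCdef]
      refine (AddSubgroup.closure_le _).mpr ?_
      rintro m ⟨t, rfl⟩
      show g • ω t ∈ C
      have hcc := cocycle_cons (fun (g : G) (m : M) => g • m) ω hω g t
      rw [(hcc : g • ω t = _)]
      exact AddSubgroup.add_mem _ (hmemC _) (AddSubgroup.sum_mem _ fun j _ =>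
        AddSubgroup.zsmul_mem _ (hmemC _) _)
    exact fun m hm => hle hm
  letI : Finite ↥C := hfin.to_subtype
  -- the action of G on C
  let ρC : G → ↥C → ↥C := fun g c => ⟨g • (c : M), hstab g c c.2⟩
  have h1C : ∀ c, ρC 1 c = c := fun c => Subtype.ext (one_smul G (c : M))
  have hmC : ∀ g h c, ρC (g * h) c = ρC g (ρC h c) := fun g h c =>
    Subtype.ext (mul_smul g h (c : M))
  have haC : ∀ g c d, ρC g (c + d) = ρC g c + ρC g d := fun g c d =>
    Subtype.ext (smul_add g (c : M) (d : M))
  let ωC : (Fin (n + 2) → G) → ↥C := fun x => ⟨ω x, hmemC x⟩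
  have hωC : dd ρC ωC = 0 := by
    have h := dd_map (Subtype.val : ↥C → M) (fun a b => rfl) ρC
      (fun (g : G) (m : M) => g • m) (fun g c => rfl) ωC
    funext x
    apply Subtype.ext
    show ((dd ρC ωC x : ↥C) : M) = ((0 : ↥C) : M)
    have h1 := congrFun h x
    have h0 := congrFun hω x
    exact (h1.symm.trans h0).trans rfl
  -- shrink G and C to `Type`
  letI : Finite (Shrink.{0} G) := Finite.of_equiv G (equivShrink.{0} G)
  letI : Finite (Shrink.{0} ↥C) := Finite.of_equiv ↥C (equivShrink.{0} ↥C)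
  let ψ : Shrink.{0} G ≃* G := Shrink.mulEquiv
  let φA : Shrink.{0} ↥C ≃+ ↥C := Shrink.addEquiv
  let ρ' : Shrink.{0} G → Shrink.{0} ↥C → Shrink.{0} ↥C := fun g a => φA.symm (ρC (ψ g) (φA a))
  have h1' : ∀ a, ρ' 1 a = a := by
    intro a
    show φA.symm (ρC (ψ 1) (φA a)) = a
    rw [map_one ψ, h1C, AddEquiv.symm_apply_apply]
  have hm' : ∀ g h a, ρ' (g * h) a = ρ' g (ρ' h a) := by
    intro g h a
    show φA.symm (ρC (ψ (g * h)) (φA a)) = φA.symm (ρC (ψ g) (φA (φA.symm (ρC (ψ h) (φA a)))))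
    rw [map_mul ψ, hmC, AddEquiv.apply_symm_apply]
  have hφAadd : ∀ a b : Shrink.{0} ↥C, φA (a + b) = φA a + φA b := fun a b => map_add φA a b
  have ha' : ∀ g a b, ρ' g (a + b) = ρ' g a + ρ' g b := by
    intro g a b
    show φA.symm (ρC (ψ g) (φA (a + b))) = φA.symm (ρC (ψ g) (φA a)) + φA.symm (ρC (ψ g) (φA b))
    rw [hφAadd, haC, map_add φA.symm]
  let ω' : (Fin (n + 2) → Shrink.{0} G) → Shrink.{0} ↥C := fun g => φA.symm (ωC (fun i => ψ (g i)))
  have hω' : dd ρ' ω' = 0 := by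
    have hcψ : ∀ (g : Shrink.{0} G) (c : ↥C), φA.symm (ρC (ψ g) c) = ρ' g (φA.symm c) := by
      intro g c
      show _ = φA.symm (ρC (ψ g) (φA (φA.symm c)))
      rw [AddEquiv.apply_symm_apply]
    have h := dd_nat (fun g : Shrink.{0} G => ψ g) (map_mul ψ) (fun c : ↥C => φA.symm c)
      (map_add φA.symm) ρC ρ' hcψ ωC
    funext g
    have h1 := congrFun h g
    show dd ρ' (fun g => φA.symm (ωC (fun i => ψ (g i)))) g = 0
    rw [h1, congrFun hωC (fun i => ψ (g i))]
    exact map_zero φA.symm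
  obtain ⟨Γ, instΓ, finΓ, π', hsurj', hab', α₀, hα₀⟩ :=
    key n (Shrink.{0} G) (Shrink.{0} ↥C) ρ' h1' hm' ha' ω' hω'
  refine ⟨Γ, instΓ, finΓ, ψ.toMonoidHom.comp π', ?_, ?_, ?_⟩
  · exact ψ.surjective.comp hsurj'
  · intro a b
    have hker : ∀ x : Γ, x ∈ (ψ.toMonoidHom.comp π').ker → x ∈ π'.ker := by
      intro x hx
      have : ψ (π' x) = 1 := hx
      have h2 : ψ (π' x) = ψ 1 := this.trans (map_one ψ).symm
      exact ψ.injective h2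
    have h := hab' ⟨a.1, hker _ a.2⟩ ⟨b.1, hker _ b.2⟩
    have h2 : (a : Γ) * (b : Γ) = (b : Γ) * (a : Γ) := congrArg Subtype.val h
    exact Subtype.ext h2
  · refine ⟨fun g => ((φA (α₀ g) : ↥C) : M), ?_⟩
    funext g
    have h := dd_map (fun a : Shrink.{0} ↥C => ((φA a : ↥C) : M))
      (fun a b => by
        show ((φA (a + b) : ↥C) : M) = ((φA a : ↥C) : M) + ((φA b : ↥C) : M)
        rw [hφAadd]
        rfl)
      (fun γ a => ρ' (π' γ) a) (fun (γ : Γ) (m : M) => (ψ.toMonoidHom.comp π') γ • m)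
      (fun γ a => by
        show ((φA (φA.symm (ρC (ψ (π' γ)) (φA a))) : ↥C) : M) = ψ (π' γ) • ((φA a : ↥C) : M)
        rw [AddEquiv.apply_symm_apply]) α₀
    have h1 := congrFun h g
    show ω (fun i => ψ (π' (g i))) = _
    rw [show dd (fun (γ : Γ) (m : M) => (ψ.toMonoidHom.comp π') γ • m)
        (fun g => ((φA (α₀ g) : ↥C) : M)) g
      = ((φA (dd (fun γ a => ρ' (π' γ) a) α₀ g) : ↥C) : M) from h1,
      ← congrFun hα₀ g]
    show ω _ = ((φA (φA.symm (ωC (fun i => ψ (π' (g i))))) : ↥C) : M)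
    rw [AddEquiv.apply_symm_apply]
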